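/- arXiv:1208.2653 — 3 statements merged into one kernel-verified Lean document; each statement's English description precedes it below -/
import Mathlib

section
/- If n is a positive odd integer, then the cardinality of (ℤ[i]/nℤ[i])^× equals n² · ∏_{p | n} (1 - 1/p)(1 - χ(p)/p), where χ(p) = (-1)^((p-1)/2) is the quadratic character of -1 mod p. -/
open Ideal

lemma gi_mk_eq_iff (m : ℕ) (x y : GaussianInt) :
    Ideal.Quotient.mk (Ideal.span {(m : GaussianInt)}) x = Ideal.Quotient.mk _ y ↔
      ((x.re : ZMod m) = (y.re : ZMod m) ∧ (x.im : ZMod m) = (y.im : ZMod m)) := by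
  rw [Ideal.Quotient.mk_eq_mk_iff_sub_mem, Ideal.mem_span_singleton]
  have : ((m : ℤ) : GaussianInt) = (m : GaussianInt) := by push_cast; rfl
  rw [← this, Zsqrtd.intCast_dvd]
  simp only [Zsqrtd.re_sub, Zsqrtd.im_sub, ZMod.intCast_eq_intCast_iff, Int.emod_emod_of_dvd,
    Int.ModEq, ← Int.modEq_iff_dvd]
  exact and_congr ⟨fun h => h.symm, fun h => h.symm⟩ ⟨fun h => h.symm, fun h => h.symm⟩

lemma gi_card_quot (m : ℕ) (hm : 0 < m) :
    Nat.card (GaussianInt ⧸ Ideal.span {(m : GaussianInt)}) = m ^ 2 := by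
  haveI : NeZero m := ⟨hm.ne'⟩
  have hG : Function.Bijective (fun ab : ZMod m × ZMod m =>
      Ideal.Quotient.mk (Ideal.span {(m : GaussianInt)})
        ⟨(ab.1.val : ℤ), (ab.2.val : ℤ)⟩) := by
    constructor
    · rintro ⟨a, b⟩ ⟨c, d⟩ h
      rw [gi_mk_eq_iff] at h
      simp only [Int.cast_natCast, ZMod.natCast_val, ZMod.cast_id, ZMod.intCast_zmod_cast] at h
      ext <;> simp [h.1, h.2]
    · intro z
      obtain ⟨x, rfl⟩ := Ideal.Quotient.mk_surjective z
      refine ⟨((x.re : ZMod m), (x.im : ZMod m)), ?_⟩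
      rw [gi_mk_eq_iff]
      simp [ZMod.natCast_val, ZMod.intCast_zmod_cast]
  calc Nat.card (GaussianInt ⧸ Ideal.span {(m : GaussianInt)})
      = Nat.card (ZMod m × ZMod m) := (Nat.card_congr (Equiv.ofBijective _ hG)).symm
    _ = m ^ 2 := by simp [Nat.card_prod, sq]

noncomputable def gf (n : ℕ) : ℕ := Nat.card (GaussianInt ⧸ Ideal.span {(n : GaussianInt)})ˣ

lemma gf_one : gf 1 = 1 := by
  have h : Subsingleton (GaussianInt ⧸ Ideal.span {((1 : ℕ) : GaussianInt)}) := by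
    rw [Ideal.Quotient.subsingleton_iff]
    simp [Ideal.span_singleton_eq_top]
  exact Nat.card_eq_one_iff_unique.2 ⟨⟨fun a b => Units.ext (Subsingleton.elim _ _)⟩, ⟨1⟩⟩

lemma gf_mul (x y : ℕ) (h : Nat.Coprime x y) : gf (x * y) = gf x * gf y := by
  have hco : IsCoprime ((x : ℕ) : GaussianInt) ((y : ℕ) : GaussianInt) := by
    have : IsCoprime (x : ℤ) (y : ℤ) := Int.isCoprime_iff_gcd_eq_one.mpr h
    have := this.map (Int.castRingHom GaussianInt)
    simpa using this
  have hspan : Ideal.span {((x * y : ℕ) : GaussianInt)} =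
      Ideal.span {((x : ℕ) : GaussianInt)} * Ideal.span {((y : ℕ) : GaussianInt)} := by
    rw [Ideal.span_singleton_mul_span_singleton]; push_cast; rfl
  have hIco : IsCoprime (Ideal.span {((x : ℕ) : GaussianInt)})
      (Ideal.span {((y : ℕ) : GaussianInt)}) :=
    (Ideal.isCoprime_span_singleton_iff _ _).mpr hco
  have e1 : (GaussianInt ⧸ Ideal.span {((x * y : ℕ) : GaussianInt)}) ≃+*
      ((GaussianInt ⧸ Ideal.span {((x : ℕ) : GaussianInt)}) ×
        (GaussianInt ⧸ Ideal.span {((y : ℕ) : GaussianInt)})) := by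
    rw [hspan]
    exact Ideal.quotientMulEquivQuotientProd _ _ hIco
  unfold gf
  rw [Nat.card_congr ((Units.mapEquiv e1.toMulEquiv).toEquiv.trans
    (MulEquiv.prodUnits).toEquiv), Nat.card_prod]
lemma int_sq_neg_one (p : ℕ) (hp : p.Prime) (h1 : p % 4 = 1) :
    ∀ k : ℕ, ∃ u : ℤ, ((p : ℤ)) ^ (k + 1) ∣ u ^ 2 + 1 := by
  haveI : Fact p.Prime := ⟨hp⟩
  haveI : NeZero p := ⟨hp.pos.ne'⟩
  intro k
  induction k with
  | zero =>
    obtain ⟨s, hs⟩ : IsSquare (-1 : ZMod p) :=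
      ZMod.exists_sq_eq_neg_one_iff.mpr (by omega)
    refine ⟨(s.val : ℤ), ?_⟩
    rw [pow_one, ← ZMod.intCast_zmod_eq_zero_iff_dvd]
    push_cast
    simp only [ZMod.natCast_zmod_val]
    rw [sq, ← hs]; ring
  | succ k ih =>
    obtain ⟨u, c, hc⟩ := ih
    have hpu : ((u : ZMod p)) ≠ 0 := by
      intro h0
      have : ((u ^ 2 + 1 : ℤ) : ZMod p) = 0 := by
        rw [ZMod.intCast_zmod_eq_zero_iff_dvd]
        exact dvd_trans (dvd_pow_self _ (Nat.succ_ne_zero k)) ⟨c, hc⟩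
      push_cast at this
      rw [h0] at this
      simp at this
    have h2 : ((2 : ZMod p)) ≠ 0 := by
      intro h0
      have h2' : ((2 : ℕ) : ZMod p) = 0 := by exact_mod_cast h0
      rw [ZMod.natCast_eq_zero_iff] at h2'
      have := Nat.le_of_dvd (by norm_num) h2'
      have := hp.two_le
      omega
    have h2u : ((2 * u : ℤ) : ZMod p) ≠ 0 := by
      push_cast
      exact mul_ne_zero h2 hpu
    -- choose t with c + 2*u*t ≡ 0 mod p
    set τ : ZMod p := -(c : ZMod p) / ((2 * u : ℤ) : ZMod p) with hτ
    refine ⟨u + (τ.val : ℤ) * (p : ℤ) ^ (k + 1), ?_⟩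
    have key : ((p : ℤ)) ∣ c + 2 * u * (τ.val : ℤ) + (τ.val : ℤ) ^ 2 * (p : ℤ) ^ (k + 1) := by
      rw [← ZMod.intCast_zmod_eq_zero_iff_dvd]
      push_cast
      simp only [ZMod.natCast_zmod_val]
      have hpk : ((p : ZMod p)) = 0 := ZMod.natCast_self p
      rw [hpk]
      rw [hτ]
      field_simp
      push_cast
      ring
    obtain ⟨d, hd⟩ := key
    refine ⟨d, ?_⟩
    have : (u + (τ.val : ℤ) * (p:ℤ) ^ (k + 1)) ^ 2 + 1
        = (p:ℤ) ^ (k+1) * (c + 2 * u * (τ.val : ℤ) + (τ.val : ℤ) ^ 2 * (p : ℤ) ^ (k + 1)) := by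
      rw [mul_add, mul_add, ← hc]; ring
    rw [this, hd, pow_succ]; ring

lemma zmod_sq_neg_one (p k : ℕ) (hp : p.Prime) (h1 : p % 4 = 1) (hk : 0 < k) :
    ∃ u : ZMod (p ^ k), u * u = -1 := by
  obtain ⟨j, rfl⟩ : ∃ j, k = j + 1 := ⟨k - 1, by omega⟩
  obtain ⟨u, hu⟩ := int_sq_neg_one p hp h1 j
  refine ⟨((u : ZMod (p ^ (j + 1)))), ?_⟩
  have : ((u ^ 2 + 1 : ℤ) : ZMod (p ^ (j+1))) = 0 := by
    rw [ZMod.intCast_zmod_eq_zero_iff_dvd]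
    exact_mod_cast hu
  push_cast at this
  rw [← sq]
  linear_combination this

lemma split_equiv_aux (N : ℕ) (hN : Odd N) (u : ZMod N) (hu : u * u = -1) :
    ∃ e : (GaussianInt ⧸ Ideal.span {(N : GaussianInt)}) ≃+* (ZMod N × ZMod N), True := by
  classical
  have hr : ((u, -u) : ZMod N × ZMod N) * (u, -u) = ((-1 : ℤ) : ZMod N × ZMod N) := by
    have h1 : ((-1 : ℤ) : ZMod N × ZMod N) = (-1, -1) := by
      ext <;> simp
    rw [h1, Prod.mk_mul_mk, neg_mul_neg, hu]
  let φ : GaussianInt →+* ZMod N × ZMod N := Zsqrtd.lift ⟨(u, -u), hr⟩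
  have hφ : ∀ x : GaussianInt, φ x = ((x.re : ZMod N) + (x.im : ZMod N) * u,
      (x.re : ZMod N) - (x.im : ZMod N) * u) := by
    intro x
    show ((x.re : ℤ) : ZMod N × ZMod N) + ((x.im : ℤ) : ZMod N × ZMod N) * (u, -u) = _
    ext <;> simp [Prod.fst_intCast, Prod.snd_intCast, mul_comm, sub_eq_add_neg]
  obtain ⟨E, hE⟩ : ∃ E : ℤ, ((2 * E : ℤ) : ZMod N) = 1 := by
    obtain ⟨m, hm⟩ := hN
    refine ⟨(m + 1 : ℤ), ?_⟩
    have h0 : ((N : ℤ) : ZMod N) = 0 := by simpa using (ZMod.natCast_self N)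
    have h' : ((2 * (m + 1) : ℤ) : ZMod N) = ((N : ℤ) : ZMod N) + 1 := by
      rw [hm]; push_cast; ring
    rw [h', h0, zero_add]
  set Ez : ZMod N := ((E : ℤ) : ZMod N) with hEzdef
  have hEz : 2 * Ez = 1 := by rw [hEzdef]; push_cast at hE ⊢; linear_combination hE
  obtain ⟨U, hU⟩ : ∃ U : ℤ, ((U : ℤ) : ZMod N) = u := ZMod.intCast_surjective u
  have huunit : u * (-u) = 1 := by linear_combination -hu
  have hker : ∀ x : GaussianInt, φ x = 0 ↔ x ∈ Ideal.span {(N : GaussianInt)} := by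
    intro x
    rw [Ideal.mem_span_singleton]
    have hNc : ((N : ℤ) : GaussianInt) = (N : GaussianInt) := by push_cast; rfl
    rw [← hNc, Zsqrtd.intCast_dvd]
    rw [hφ, Prod.ext_iff]
    simp only [Prod.fst_zero, Prod.snd_zero]
    constructor
    · rintro ⟨ha, hb⟩
      have h2x : (2 : ZMod N) * (x.re : ZMod N) = 0 := by linear_combination ha + hb
      have h2y : (2 : ZMod N) * ((x.im : ZMod N) * u) = 0 := by linear_combination ha - hb
      have hre : ((x.re : ZMod N)) = 0 := by
        linear_combination Ez * h2x - ((x.re : ZMod N)) * hEz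
      have him : ((x.im : ZMod N)) = 0 := by
        linear_combination (-Ez * u) * h2y - ((x.im : ZMod N)) * hEz
          - (2 * Ez * (x.im : ZMod N)) * huunit
      constructor <;> rwa [← ZMod.intCast_zmod_eq_zero_iff_dvd]
    · rintro ⟨ha, hb⟩
      rw [← ZMod.intCast_zmod_eq_zero_iff_dvd] at ha hb
      constructor <;> rw [ha, hb] <;> ring
  have hsurj : Function.Surjective φ := by
    rintro ⟨a, b⟩
    obtain ⟨A, hA⟩ := ZMod.intCast_surjective a
    obtain ⟨B, hB⟩ := ZMod.intCast_surjective b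
    refine ⟨⟨E * (A + B), (A - B) * E * (-U)⟩, ?_⟩
    rw [hφ]
    ext
    · show ((E * (A + B) : ℤ) : ZMod N) + (((A - B) * E * (-U) : ℤ) : ZMod N) * u = a
      push_cast
      rw [hU, hA, hB, ← hEzdef]
      linear_combination ((a - b) * Ez) * huunit + a * hEz
    · show ((E * (A + B) : ℤ) : ZMod N) - (((A - B) * E * (-U) : ℤ) : ZMod N) * u = b
      push_cast
      rw [hU, hA, hB, ← hEzdef]
      linear_combination (-(a - b) * Ez) * huunit + b * hEz
  let ψ := Ideal.Quotient.lift _ φ (fun x hx => (hker x).mpr hx)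
  have hψsurj : Function.Surjective ψ := fun z => by
    obtain ⟨x, hx⟩ := hsurj z
    exact ⟨Ideal.Quotient.mk _ x, by simpa [ψ] using hx⟩
  have hψinj : Function.Injective ψ := by
    intro a b hab
    obtain ⟨x, rfl⟩ := Ideal.Quotient.mk_surjective a
    obtain ⟨y, rfl⟩ := Ideal.Quotient.mk_surjective b
    rw [Ideal.Quotient.mk_eq_mk_iff_sub_mem]
    apply (hker _).mp
    have hxy : φ x = φ y := by simpa [ψ] using hab
    rw [map_sub, hxy, sub_self]
  exact ⟨RingEquiv.ofBijective ψ ⟨hψinj, hψsurj⟩, trivial⟩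

lemma nat_card_units_eq_subtype (M : Type*) [CommMonoid M] :
    Nat.card Mˣ = Nat.card {x : M // IsUnit x} :=
  Nat.card_congr ⟨fun u => ⟨u, u.isUnit⟩, fun x => x.2.unit,
    fun u => Units.ext (by simp), fun x => Subtype.ext x.2.unit_spec⟩

lemma inert_card (p k : ℕ) (hp : p.Prime) (h3 : p % 4 = 3) (hk : 0 < k)
    (hcard : ∀ m : ℕ, 0 < m →
      Nat.card (GaussianInt ⧸ Ideal.span {(m : GaussianInt)}) = m ^ 2) :
    Nat.card (GaussianInt ⧸ Ideal.span {((p ^ k : ℕ) : GaussianInt)})ˣ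
      = p ^ (2 * k) - p ^ (2 * k - 2) := by
  classical
  haveI : Fact p.Prime := ⟨hp⟩
  have hprime : Prime ((p : GaussianInt)) :=
    (GaussianInt.prime_iff_mod_four_eq_three_of_nat_prime p).mpr h3
  set J : Ideal GaussianInt := Ideal.span {((p ^ k : ℕ) : GaussianInt)} with hJ
  set I : Ideal GaussianInt := Ideal.span {((p : ℕ) : GaussianInt)} with hI
  have hpk : ((p ^ k : ℕ) : GaussianInt) = ((p : ℕ) : GaussianInt) ^ k := by push_cast; rfl
  have hJI : J ≤ I := by
    rw [hJ, hI, Ideal.span_singleton_le_span_singleton, hpk]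
    exact dvd_pow_self _ hk.ne'
  have hImax : I.IsMaximal := PrincipalIdealRing.isMaximal_of_irreducible hprime.irreducible
  set M : Ideal (GaussianInt ⧸ J) := I.map (Ideal.Quotient.mk J) with hM
  have hmem : ∀ x : GaussianInt, Ideal.Quotient.mk J x ∈ M ↔ x ∈ I := by
    intro x
    rw [hM]
    constructor
    · intro hx
      obtain ⟨y, hy, hyx⟩ := (Ideal.mem_map_iff_of_surjective _
        Ideal.Quotient.mk_surjective).mp hx
      have hsub : y - x ∈ J := by rw [← Ideal.Quotient.mk_eq_mk_iff_sub_mem, hyx]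
      have hxy : x = y - (y - x) := by ring
      rw [hxy]
      exact I.sub_mem hy (hJI hsub)
    · exact fun hx => Ideal.mem_map_of_mem _ hx
  have hunit : ∀ z : GaussianInt ⧸ J, IsUnit z ↔ z ∉ M := by
    intro z
    obtain ⟨x, rfl⟩ := Ideal.Quotient.mk_surjective z
    rw [hmem]
    constructor
    · intro hz hx
      obtain ⟨v, hv⟩ := hz
      obtain ⟨y, hy⟩ := Ideal.Quotient.mk_surjective (↑v⁻¹ : GaussianInt ⧸ J)
      have h1 : Ideal.Quotient.mk J (x * y) = 1 := by
        rw [_root_.map_mul, ← hv, hy, Units.mul_inv]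
      have hsub : x * y - 1 ∈ J := by
        rw [← Ideal.Quotient.mk_eq_mk_iff_sub_mem, h1, map_one]
      have h1I : (1 : GaussianInt) ∈ I := by
        have h2 := hJI hsub
        have hxyI : x * y ∈ I := I.mul_mem_right y hx
        have := I.sub_mem hxyI h2
        simpa using this
      exact hImax.ne_top ((Ideal.eq_top_iff_one I).mpr h1I)
    · intro hx
      have hndvd : ¬ ((p : GaussianInt) ∣ x) := by
        intro hdvd
        exact hx (by rw [hI]; exact (Ideal.mem_span_singleton).mpr (by exact_mod_cast hdvd))
      have hco : IsCoprime ((p : GaussianInt)) x :=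
        (EuclideanDomain.dvd_or_coprime _ _ hprime.irreducible).resolve_left hndvd
      have hcok : IsCoprime (((p ^ k : ℕ) : GaussianInt)) x := by
        rw [hpk]
        exact (hco.pow_left)
      obtain ⟨a, b, hab⟩ := hcok
      refine IsUnit.of_mul_eq_one (Ideal.Quotient.mk J b) ?_
      have : Ideal.Quotient.mk J (b * x) = Ideal.Quotient.mk J 1 := by
        rw [Ideal.Quotient.mk_eq_mk_iff_sub_mem]
        have : b * x - 1 = -a * ((p ^ k : ℕ) : GaussianInt) := by linear_combination hab
        rw [this, hJ]
        exact Ideal.mul_mem_left _ _ (Ideal.mem_span_singleton_self _)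
      rw [← _root_.map_mul, mul_comm x b]
      simpa using this
  -- cardinalities
  have hcQ : Nat.card (GaussianInt ⧸ J) = p ^ (2 * k) := by
    rw [hJ, hcard _ (pow_pos hp.pos k), ← pow_mul, mul_comm k 2]
  have hfinQ : Finite (GaussianInt ⧸ J) :=
    Nat.finite_of_card_ne_zero (by rw [hcQ]; exact (pow_pos hp.pos _).ne')
  have hcQM : Nat.card ((GaussianInt ⧸ J) ⧸ M) = p ^ 2 := by
    have e := DoubleQuot.quotQuotEquivQuotOfLE hJI
    rw [Nat.card_congr e.toEquiv, hI, hcard _ hp.pos]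
  have hcM : Nat.card M = p ^ (2 * k - 2) := by
    have h := AddSubgroup.card_eq_card_quotient_mul_card_addSubgroup (M.toAddSubgroup)
    have hq : Nat.card ((GaussianInt ⧸ J) ⧸ M.toAddSubgroup)
        = Nat.card ((GaussianInt ⧸ J) ⧸ M) := rfl
    rw [hq, hcQM, hcQ] at h
    have hMcard : Nat.card M.toAddSubgroup = Nat.card M := rfl
    have hkey : p ^ (2 * k) = p ^ 2 * p ^ (2 * k - 2) := by
      rw [← pow_add]
      congr 1
      omega
    rw [hkey] at h
    have := Nat.eq_of_mul_eq_mul_left (pow_pos hp.pos 2) h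
    rw [← hMcard, ← this]
  rw [nat_card_units_eq_subtype]
  have hsub : Nat.card {x : GaussianInt ⧸ J // IsUnit x}
      = Nat.card {x : GaussianInt ⧸ J // x ∈ ((M : Set (GaussianInt ⧸ J))ᶜ)} := by
    apply Nat.card_congr
    apply Equiv.subtypeEquivRight
    intro z
    rw [hunit z]
    rfl
  rw [hsub]
  have hcompl := Set.ncard_add_ncard_compl (M : Set (GaussianInt ⧸ J)) (Set.toFinite _)
  rw [Nat.card_coe_set_eq]
  have hMn : (M : Set (GaussianInt ⧸ J)).ncard = p ^ (2 * k - 2) := by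
    rw [← Nat.card_coe_set_eq]
    exact hcM
  omega
lemma gf_prime_pow (p k : ℕ) (hp : p.Prime) (hpodd : p % 2 = 1) (hk : 0 < k) :
    (gf (p ^ k) : ℚ) = (p : ℚ) ^ (2 * k) *
      ((1 - 1 / (p : ℚ)) * (1 - (-1 : ℚ) ^ ((p - 1) / 2) / (p : ℚ))) := by
  have hp0 : (p : ℚ) ≠ 0 := Nat.cast_ne_zero.mpr hp.pos.ne'
  have h4 : p % 4 = 1 ∨ p % 4 = 3 := by omega
  obtain ⟨j, rfl⟩ : ∃ j, k = j + 1 := ⟨k - 1, by omega⟩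
  rcases h4 with h1 | h3
  · -- split case
    obtain ⟨m, hm⟩ : ∃ m, p = 4 * m + 1 := ⟨p / 4, by omega⟩
    have hχ : ((-1 : ℚ)) ^ ((p - 1) / 2) = 1 := by
      have h2 : (p - 1) / 2 = 2 * m := by omega
      rw [h2, pow_mul]; norm_num
    obtain ⟨u, hu⟩ := zmod_sq_neg_one p (j + 1) hp h1 (Nat.succ_pos j)
    have hOdd : Odd (p ^ (j + 1)) := (Nat.odd_iff.mpr hpodd).pow
    obtain ⟨e, -⟩ := split_equiv_aux (p ^ (j + 1)) hOdd u hu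
    haveI : NeZero (p ^ (j + 1)) := ⟨(pow_pos hp.pos _).ne'⟩
    have hcard : gf (p ^ (j + 1)) = (p ^ j * (p - 1)) * (p ^ j * (p - 1)) := by
      unfold gf
      rw [Nat.card_congr ((Units.mapEquiv e.toMulEquiv).toEquiv.trans
        (MulEquiv.prodUnits).toEquiv), Nat.card_prod]
      rw [Nat.card_eq_fintype_card, ZMod.card_units_eq_totient,
        Nat.totient_prime_pow hp (Nat.succ_pos j)]
      simp
    rw [hcard, hχ]
    have hp1 : (1 : ℚ) ≤ (p : ℚ) := by exact_mod_cast hp.one_le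
    push_cast [Nat.cast_sub hp.one_le]
    field_simp
    ring
  · -- inert case
    obtain ⟨m, hm⟩ : ∃ m, p = 4 * m + 3 := ⟨p / 4, by omega⟩
    have hχ : ((-1 : ℚ)) ^ ((p - 1) / 2) = -1 := by
      have h2 : (p - 1) / 2 = 2 * m + 1 := by omega
      rw [h2, pow_succ, pow_mul]; norm_num
    have hcard : gf (p ^ (j + 1)) = p ^ (2 * (j + 1)) - p ^ (2 * (j + 1) - 2) := by
      unfold gf
      exact inert_card p (j + 1) hp h3 (Nat.succ_pos j) gi_card_quot
    have hle : p ^ (2 * (j + 1) - 2) ≤ p ^ (2 * (j + 1)) :=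
      Nat.pow_le_pow_right hp.pos (by omega)
    have h2e : 2 * (j + 1) - 2 = 2 * j := by omega
    rw [h2e] at hcard hle
    rw [hcard, hχ, Nat.cast_sub hle]
    push_cast
    field_simp
    ring

theorem stmt_5 (n : ℕ) (hn : 0 < n) (hodd : Odd n) :
    (Nat.card (GaussianInt ⧸ Ideal.span {(n : GaussianInt)})ˣ : ℚ) =
      (n : ℚ) ^ 2 * ∏ p ∈ n.primeFactors,
        ((1 - 1 / (p : ℚ)) * (1 - (-1 : ℚ) ^ ((p - 1) / 2) / (p : ℚ))) := by
  have hfac := Nat.multiplicative_factorization gf gf_mul gf_one hn.ne'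
  have hLHS : (Nat.card (GaussianInt ⧸ Ideal.span {(n : GaussianInt)})ˣ : ℚ) = (gf n : ℚ) := rfl
  rw [hLHS, hfac]
  rw [Finsupp.prod, Nat.support_factorization]
  push_cast
  -- express n^2 as a product
  have hn2 : (n : ℚ) ^ 2 = ∏ p ∈ n.primeFactors, (p : ℚ) ^ (2 * n.factorization p) := by
    conv_lhs => rw [← Nat.factorization_prod_pow_eq_self hn.ne']
    rw [Finsupp.prod, Nat.support_factorization]
    push_cast
    rw [← Finset.prod_pow]
    apply Finset.prod_congr rfl
    intro p hp
    rw [← pow_mul, mul_comm]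
  rw [hn2, ← Finset.prod_mul_distrib]
  apply Finset.prod_congr rfl
  intro p hp
  have hpp : p.Prime := Nat.prime_of_mem_primeFactors hp
  have hpdvd : p ∣ n := Nat.dvd_of_mem_primeFactors hp
  have hpne2 : p ≠ 2 := by
    rintro rfl
    obtain ⟨c, hc⟩ := hpdvd
    rw [Nat.odd_iff, hc] at hodd
    omega
  have hpodd : p % 2 = 1 := Nat.odd_iff.mp (hpp.odd_of_ne_two hpne2)
  have hkpos : 0 < n.factorization p := Nat.Prime.factorization_pos_of_dvd hpp hn.ne' hpdvd
  exact gf_prime_pow p (n.factorization p) hpp hpodd hkpos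
end

section
/- Let n be a positive odd integer. Then |(ℤ[i]/nℤ[i])^×| is a power of 2 if and only if n is a squarefree product of Fermat primes (primes p with p - 1 a power of 2). -/
open Ideal Zsqrtd

noncomputable section

namespace Stmt7Aux

abbrev Q (a : GaussianInt) : Type := GaussianInt ⧸ Ideal.span {a}

lemma mem_span_natCast {n : ℕ} {z : GaussianInt} :
    z ∈ Ideal.span {(n : GaussianInt)} ↔ (n : ℤ) ∣ z.re ∧ (n : ℤ) ∣ z.im := by
  rw [Ideal.mem_span_singleton]
  have h : (((n : ℤ) : GaussianInt)) = (n : GaussianInt) := by push_cast; ring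
  rw [← h, Zsqrtd.intCast_dvd]

lemma card_quot (n : ℕ) (hn : n ≠ 0) :
    Nat.card (Q (n : GaussianInt)) = n ^ 2 := by
  haveI : NeZero n := ⟨hn⟩
  have hb : Function.Bijective (fun x : ZMod n × ZMod n =>
      (Ideal.Quotient.mk (Ideal.span {(n : GaussianInt)})
        ⟨(x.1.val : ℤ), (x.2.val : ℤ)⟩)) := by
    constructor
    · rintro ⟨a, b⟩ ⟨c, d⟩ h
      rw [Ideal.Quotient.eq, mem_span_natCast] at h
      obtain ⟨h1, h2⟩ := h
      simp only [Zsqrtd.re_sub, Zsqrtd.im_sub] at h1 h2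
      have e1 : ((((a.val : ℤ) - (c.val : ℤ)) : ℤ) : ZMod n) = 0 :=
        (ZMod.intCast_zmod_eq_zero_iff_dvd _ n).mpr h1
      have e2 : ((((b.val : ℤ) - (d.val : ℤ)) : ℤ) : ZMod n) = 0 :=
        (ZMod.intCast_zmod_eq_zero_iff_dvd _ n).mpr h2
      push_cast at e1 e2
      rw [ZMod.natCast_val, ZMod.natCast_val, ZMod.cast_id, ZMod.cast_id, sub_eq_zero] at e1 e2
      exact Prod.ext e1 e2
    · intro z
      obtain ⟨w, rfl⟩ := Ideal.Quotient.mk_surjective z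
      refine ⟨((w.re : ZMod n), (w.im : ZMod n)), ?_⟩
      rw [Ideal.Quotient.eq, mem_span_natCast]
      constructor
      · simp only [Zsqrtd.re_sub]
        rw [← ZMod.intCast_zmod_eq_zero_iff_dvd]
        push_cast
        rw [ZMod.natCast_val, ZMod.cast_id]
        ring
      · simp only [Zsqrtd.im_sub]
        rw [← ZMod.intCast_zmod_eq_zero_iff_dvd]
        push_cast
        rw [ZMod.natCast_val, ZMod.cast_id]
        ring
  rw [← Nat.card_eq_of_bijective _ hb, Nat.card_prod, Nat.card_zmod]
  ring

lemma finite_quot (n : ℕ) (hn : n ≠ 0) : Finite (Q (n : GaussianInt)) :=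
  Nat.finite_of_card_ne_zero (by rw [card_quot n hn]; positivity)

lemma charP_quot (n : ℕ) : CharP (Q (n : GaussianInt)) n := by
  constructor
  intro k
  rw [← map_natCast (Ideal.Quotient.mk (Ideal.span {(n : GaussianInt)})),
    Ideal.Quotient.eq_zero_iff_mem, mem_span_natCast]
  simp [Int.natCast_dvd_natCast]

lemma card_units_mul (a b : GaussianInt) (h : IsCoprime a b) :
    Nat.card (Q (a * b))ˣ = Nat.card (Q a)ˣ * Nat.card (Q b)ˣ := by
  have e : (Q (a * b)) ≃+* ((Q a) × (Q b)) :=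
    (Ideal.quotEquivOfEq (by rw [Ideal.span_singleton_mul_span_singleton])).trans
      (Ideal.quotientMulEquivQuotientProd _ _
        ((Ideal.isCoprime_span_singleton_iff a b).mpr h))
  calc Nat.card (Q (a * b))ˣ = Nat.card ((Q a) × (Q b))ˣ :=
        Nat.card_congr (Units.mapEquiv e.toMulEquiv).toEquiv
    _ = Nat.card ((Q a)ˣ × (Q b)ˣ) := Nat.card_congr MulEquiv.prodUnits.toEquiv
    _ = Nat.card (Q a)ˣ * Nat.card (Q b)ˣ := Nat.card_prod _ _

lemma irred (z : GaussianInt) (p : ℕ) (hp : p.Prime) (h : z.norm = p) : Irreducible z := by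
  constructor
  · intro hu
    have h1 := Zsqrtd.norm_eq_one_iff.mpr hu
    rw [h] at h1
    simp only [Int.natAbs_natCast] at h1
    exact hp.ne_one h1
  · intro x y hxy
    have hn : x.norm.natAbs * y.norm.natAbs = p := by
      rw [← Int.natAbs_mul, ← Zsqrtd.norm_mul, ← hxy, h, Int.natAbs_natCast]
    rcases hp.eq_one_or_self_of_dvd x.norm.natAbs ⟨_, hn.symm⟩ with h1 | h2
    · exact Or.inl (Zsqrtd.norm_eq_one_iff.mp h1)
    · right
      apply Zsqrtd.norm_eq_one_iff.mp
      have hp0 : p ≠ 0 := hp.pos.ne'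
      rw [h2] at hn
      nlinarith [hn, hp.two_le]

lemma card_units_field {F : Type*} [Field F] [Finite F] : Nat.card Fˣ = Nat.card F - 1 := by
  haveI := Fintype.ofFinite F
  classical
  rw [Nat.card_eq_fintype_card, Nat.card_eq_fintype_card, Fintype.card_units]

lemma card_units_split (p : ℕ) (hp : p.Prime) (a b : ℤ) (hab : a ^ 2 + b ^ 2 = (p : ℤ))
    (hb : ¬(p : ℤ) ∣ b) :
    Nat.card (Q ((⟨a, b⟩ : GaussianInt)))ˣ = p - 1 := by
  haveI : Fact p.Prime := ⟨hp⟩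
  have hb' : (b : ZMod p) ≠ 0 := by
    rwa [Ne, ZMod.intCast_zmod_eq_zero_iff_dvd]
  have h1 : (b : ZMod p) * (b : ZMod p)⁻¹ = 1 := mul_inv_cancel₀ hb'
  have ha : ((a : ZMod p)) ^ 2 = -((b : ZMod p)) ^ 2 := by
    have h0 : ((a ^ 2 + b ^ 2 : ℤ) : ZMod p) = 0 := by
      rw [hab]; simp [ZMod.intCast_zmod_eq_zero_iff_dvd]
    push_cast at h0
    linear_combination h0
  set c : ZMod p := -(a : ZMod p) * (b : ZMod p)⁻¹ with hc_def
  have hc : c * c = ((-1 : ℤ) : ZMod p) := by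
    have : c * c = ((a : ZMod p)) ^ 2 * ((b : ZMod p)⁻¹) ^ 2 := by rw [hc_def]; ring
    rw [this, ha]
    push_cast
    calc -((b:ZMod p))^2 * ((b:ZMod p)⁻¹)^2 = -(((b:ZMod p) * (b:ZMod p)⁻¹)^2) := by ring
      _ = -1 := by rw [h1]; ring
  let ψ : GaussianInt →+* ZMod p := Zsqrtd.lift ⟨c, hc⟩
  have hψπ : ψ (⟨a, b⟩ : GaussianInt) = 0 := by
    show (a : ZMod p) + (b : ZMod p) * c = 0
    rw [hc_def]
    calc (a : ZMod p) + (b : ZMod p) * (-(a : ZMod p) * (b : ZMod p)⁻¹)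
        = (a : ZMod p) - ((b : ZMod p) * (b : ZMod p)⁻¹) * (a : ZMod p) := by ring
      _ = 0 := by rw [h1]; ring
  have hsurj : Function.Surjective ψ := by
    intro x
    refine ⟨((x.val : ℤ) : GaussianInt), ?_⟩
    rw [map_intCast]
    push_cast
    exact ZMod.natCast_rightInverse x
  have hnorm : (⟨a, b⟩ : GaussianInt).norm = (p : ℤ) := by
    simp only [Zsqrtd.norm]
    ring_nf
    linear_combination hab
  haveI hmax : (Ideal.span {(⟨a, b⟩ : GaussianInt)}).IsMaximal :=
    PrincipalIdealRing.isMaximal_of_irreducible (irred _ p hp hnorm)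
  have hle : Ideal.span {(⟨a, b⟩ : GaussianInt)} ≤ RingHom.ker ψ := by
    rw [Ideal.span_le, Set.singleton_subset_iff]
    exact hψπ
  have hker : RingHom.ker ψ = Ideal.span {(⟨a, b⟩ : GaussianInt)} :=
    (hmax.eq_of_le (RingHom.ker_ne_top ψ) hle).symm
  have e : (Q ((⟨a, b⟩ : GaussianInt))) ≃+* ZMod p :=
    (Ideal.quotEquivOfEq hker.symm).trans (RingHom.quotientKerEquivOfSurjective hsurj)
  rw [Nat.card_congr (Units.mapEquiv e.toMulEquiv).toEquiv, Nat.card_eq_fintype_card,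
    ZMod.card_units]

lemma card_units_inert (p : ℕ) (hp : p.Prime) (h3 : p % 4 = 3) :
    Nat.card (Q ((p : GaussianInt)))ˣ = p ^ 2 - 1 := by
  haveI : Fact p.Prime := ⟨hp⟩
  have hprime : Prime (p : GaussianInt) :=
    GaussianInt.prime_of_nat_prime_of_mod_four_eq_three p h3
  haveI hmax : (Ideal.span {(p : GaussianInt)}).IsMaximal :=
    PrincipalIdealRing.isMaximal_of_irreducible hprime.irreducible
  letI : Field (Q ((p : GaussianInt))) := Ideal.Quotient.field _
  haveI : Finite (Q ((p : GaussianInt))) := finite_quot p hp.pos.ne'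
  rw [card_units_field, card_quot p hp.pos.ne']

lemma not_dvd_of_sq_add_sq (p a b : ℕ) (hp : p.Prime) (h : a ^ 2 + b ^ 2 = p) : ¬p ∣ b := by
  intro hdvd
  rcases Nat.eq_zero_or_pos b with rfl | hbpos
  · have h' : a * a = p := by nlinarith [h]
    have ha : a ∣ p := ⟨a, h'.symm⟩
    rcases hp.eq_one_or_self_of_dvd a ha with h1 | h2
    · rw [h1] at h'; simp at h'; exact hp.ne_one h'.symm
    · rw [h2] at h'; nlinarith [hp.two_le]
  · have hpb : p ≤ b := Nat.le_of_dvd hbpos hdvd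
    nlinarith [hp.two_le]

lemma card_units_split_prime (p : ℕ) (hp : p.Prime) (h1 : p % 4 = 1) :
    Nat.card (Q ((p : GaussianInt)))ˣ = (p - 1) ^ 2 := by
  haveI : Fact p.Prime := ⟨hp⟩
  obtain ⟨a, b, hab⟩ := Nat.Prime.sq_add_sq (p := p) (by omega)
  have habZ : (a : ℤ) ^ 2 + (b : ℤ) ^ 2 = (p : ℤ) := by exact_mod_cast congrArg (Nat.cast : ℕ → ℤ) hab
  have hbn : ¬(p : ℤ) ∣ (b : ℤ) := by
    rw [Int.natCast_dvd_natCast]; exact not_dvd_of_sq_add_sq p a b hp hab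
  have han : ¬(p : ℤ) ∣ (a : ℤ) := by
    rw [Int.natCast_dvd_natCast]
    exact not_dvd_of_sq_add_sq p b a hp (by omega)
  set α : GaussianInt := ⟨(a : ℤ), (b : ℤ)⟩ with hα
  set β : GaussianInt := ⟨(a : ℤ), -(b : ℤ)⟩ with hβ
  have hnormα : α.norm = (p : ℤ) := by
    simp only [hα, Zsqrtd.norm]; ring_nf; linear_combination habZ
  have hmul : (p : GaussianInt) = α * β := by
    ext
    · simp only [hα, hβ, Zsqrtd.re_mul, Zsqrtd.re_natCast]
      linear_combination habZ.symm
    · simp only [hα, hβ, Zsqrtd.im_mul, Zsqrtd.im_natCast]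
      ring
  have hpZ : Prime ((p : ℤ)) := Nat.prime_iff_prime_int.mp hp
  have hcop : IsCoprime α β := by
    rw [(irred α p hp hnormα).coprime_iff_not_dvd]
    intro hdvd
    have h2a : α ∣ ((2 * a : ℤ) : GaussianInt) := by
      have he : ((2 * (a : ℤ) : ℤ) : GaussianInt) = α + β := by
        ext <;> simp [hα, hβ] <;> ring
      rw [show ((2 * a : ℤ) : GaussianInt) = α + β from he]
      exact dvd_add dvd_rfl hdvd
    have h2b : α ∣ ((2 * b : ℤ) : GaussianInt) := by
      have he : ((2 * (b : ℤ) : ℤ) : GaussianInt) = (α - β) * ⟨0, -1⟩ := by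
        ext <;> simp [hα, hβ, Zsqrtd.re_mul, Zsqrtd.im_mul] <;> ring
      rw [show ((2 * b : ℤ) : GaussianInt) = (α - β) * ⟨0, -1⟩ from he]
      exact (dvd_sub dvd_rfl hdvd).mul_right _
    have hdvd_norm : ∀ t : ℤ, α ∣ ((t : ℤ) : GaussianInt) → (p : ℤ) ∣ t * t := by
      intro t ⟨w, hw⟩
      have := congrArg Zsqrtd.norm hw
      rw [Zsqrtd.norm_intCast, Zsqrtd.norm_mul, hnormα] at this
      exact ⟨w.norm, this⟩
    have hpa : (p : ℤ) ∣ (a : ℤ) := by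
      have := hdvd_norm _ h2a
      have h4 : (p : ℤ) ∣ (2 * a) := by
        have := hpZ.dvd_of_dvd_pow (n := 2) (by rw [pow_two]; exact this)
        exact this
      rcases hpZ.dvd_mul.mp h4 with h | h
      · exfalso
        have hd2 : (p : ℕ) ∣ 2 := by exact_mod_cast h
        have hle2 : p ≤ 2 := Nat.le_of_dvd (by norm_num) hd2
        have h2le := hp.two_le
        omega
      · exact h
    have hpb : (p : ℤ) ∣ (b : ℤ) := by
      have := hdvd_norm _ h2b
      have h4 : (p : ℤ) ∣ (2 * b) := hpZ.dvd_of_dvd_pow (n := 2) (by rw [pow_two]; exact this)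
      rcases hpZ.dvd_mul.mp h4 with h | h
      · exfalso
        have hd2 : (p : ℕ) ∣ 2 := by exact_mod_cast h
        have hle2 : p ≤ 2 := Nat.le_of_dvd (by norm_num) hd2
        have h2le := hp.two_le
        omega
      · exact h
    have hsq : ((p : ℤ)) ^ 2 ∣ (p : ℤ) := by
      have d1 : ((p : ℤ)) ^ 2 ∣ (a : ℤ) ^ 2 := pow_dvd_pow_of_dvd hpa 2
      have d2 : ((p : ℤ)) ^ 2 ∣ (b : ℤ) ^ 2 := pow_dvd_pow_of_dvd hpb 2
      have := dvd_add d1 d2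
      rwa [habZ] at this
    have : (p : ℕ) ^ 2 ∣ p := by exact_mod_cast hsq
    have := Nat.le_of_dvd hp.pos this
    nlinarith [hp.two_le]
  rw [hmul, card_units_mul _ _ hcop, card_units_split p hp _ _ habZ hbn,
    card_units_split p hp a (-b) (by linear_combination habZ) (by rwa [dvd_neg]), ← pow_two]

lemma back (n : ℕ) (hn : 0 < n) (hodd : Odd n) (hsf : Squarefree n)
    (hF : ∀ p ∈ n.primeFactors, ∃ k : ℕ, p - 1 = 2 ^ k) :
    ∃ k : ℕ, Nat.card (Q ((n : GaussianInt)))ˣ = 2 ^ k := by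
  induction n using Nat.strong_induction_on with
  | _ n ih =>
  rcases eq_or_lt_of_le (show 1 ≤ n from hn) with h1 | h2
  · refine ⟨0, ?_⟩
    have htop : Ideal.span {((n : GaussianInt))} = ⊤ := by
      rw [← h1]; push_cast; exact Ideal.span_singleton_one
    haveI : Subsingleton (Q ((n : GaussianInt))) := Ideal.Quotient.subsingleton_iff.mpr htop
    haveI : Subsingleton (Q ((n : GaussianInt)))ˣ :=
      ⟨fun a b => Units.ext (Subsingleton.elim _ _)⟩
    rw [pow_zero]
    exact Nat.card_eq_one_iff_unique.mpr ⟨inferInstance, ⟨1⟩⟩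
  · have hn1 : n ≠ 1 := by omega
    set p := n.minFac with hpdef
    have hp : p.Prime := Nat.minFac_prime hn1
    have hpn : p ∣ n := n.minFac_dvd
    set m := n / p with hmdef
    have hnm : n = p * m := (Nat.mul_div_cancel' hpn).symm
    have hm0 : 0 < m := by
      rcases Nat.eq_zero_or_pos m with h | h
      · rw [h, Nat.mul_zero] at hnm; omega
      · exact h
    have hmlt : m < n := by
      rw [hnm]
      exact (Nat.lt_mul_iff_one_lt_left hm0).mpr hp.one_lt
    have hmdvd : m ∣ n := ⟨p, by rw [hnm]; ring⟩
    have hmsf : Squarefree m := hsf.squarefree_of_dvd hmdvd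
    have h2n : ¬2 ∣ n := by
      rw [Nat.odd_iff] at hodd; omega
    have hmodd : Odd m := by
      rw [Nat.odd_iff]
      rcases Nat.even_or_odd m with he | ho
      · exfalso; exact h2n ((even_iff_two_dvd.mp he).trans hmdvd)
      · exact Nat.odd_iff.mp ho
    have hFm : ∀ q ∈ m.primeFactors, ∃ k : ℕ, q - 1 = 2 ^ k := fun q hq =>
      hF q (Nat.primeFactors_mono hmdvd hn.ne' hq)
    obtain ⟨j, hjm⟩ := ih m hmlt hm0 hmodd hmsf hFm
    have hcopnat : Nat.Coprime p m := by
      rw [hp.coprime_iff_not_dvd]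
      intro hpm
      have hpp : p * p ∣ n := by rw [hnm]; exact mul_dvd_mul_left p hpm
      exact hp.not_isUnit (hsf p hpp)
    have hcop : IsCoprime ((p : GaussianInt)) ((m : GaussianInt)) := by
      have h0 : IsCoprime ((p : ℤ)) ((m : ℤ)) := Nat.isCoprime_iff_coprime.mpr hcopnat
      have h1 := h0.map (Int.castRingHom GaussianInt)
      rw [map_natCast, map_natCast] at h1
      exact h1
    have hpodd : p % 2 = 1 := by
      rcases Nat.Prime.eq_two_or_odd hp with h | h
      · exfalso; exact h2n (h ▸ hpn)
      · exact h
    obtain ⟨k, hk⟩ := hF p (Nat.mem_primeFactors.mpr ⟨hp, hpn, hn.ne'⟩)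
    have hpcase : p % 4 = 1 ∨ p % 4 = 3 := by omega
    have hpcard : ∃ i : ℕ, Nat.card (Q ((p : GaussianInt)))ˣ = 2 ^ i := by
      rcases hpcase with hc1 | hc3
      · exact ⟨k * 2, by rw [card_units_split_prime p hp hc1, hk, pow_mul]⟩
      · have hp3 : p = 3 := by
          have hp2 := hp.two_le
          rcases k with _ | _ | k
          · simp at hk; omega
          · simp at hk; omega
          · exfalso
            rw [pow_succ, pow_succ] at hk
            have h2k : 0 < 2 ^ k := Nat.pow_pos (n := k) (by norm_num)
            generalize 2 ^ k = t at hk h2k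
            omega
        refine ⟨3, ?_⟩
        rw [hp3, card_units_inert 3 (by norm_num) (by norm_num)]
        norm_num
    obtain ⟨i, hip⟩ := hpcard
    refine ⟨i + j, ?_⟩
    rw [hnm, Nat.cast_mul, card_units_mul _ _ hcop, hip, hjm, pow_add]

end Stmt7Aux

theorem stmt_7 (n : ℕ) (hn : 0 < n) (hodd : Odd n) :
    (∃ k : ℕ, Nat.card (GaussianInt ⧸ Ideal.span {(n : GaussianInt)})ˣ = 2 ^ k) ↔
      Squarefree n ∧ ∀ p ∈ n.primeFactors, ∃ k : ℕ, p - 1 = 2 ^ k := by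
  constructor
  · rintro ⟨k, hk⟩
    haveI : NeZero n := ⟨hn.ne'⟩
    haveI : CharP (GaussianInt ⧸ Ideal.span {(n : GaussianInt)}) n := Stmt7Aux.charP_quot n
    haveI : Finite (GaussianInt ⧸ Ideal.span {(n : GaussianInt)}) := Stmt7Aux.finite_quot n hn.ne'
    have hinj : Function.Injective
        (Units.map (ZMod.castHom (dvd_refl n)
          (GaussianInt ⧸ Ideal.span {(n : GaussianInt)})).toMonoidHom) :=
      Units.map_injective (ZMod.castHom_injective _)
    have hdvd : Nat.card (ZMod n)ˣ ∣ 2 ^ k := by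
      rw [← hk]
      exact Subgroup.card_dvd_of_injective _ hinj
    rw [Nat.card_eq_fintype_card, ZMod.card_units_eq_totient] at hdvd
    obtain ⟨j, hjk, hj⟩ := (Nat.dvd_prime_pow Nat.prime_two).mp hdvd
    have h2n : ¬2 ∣ n := by rw [Nat.odd_iff] at hodd; omega
    constructor
    · rw [Nat.squarefree_iff_prime_squarefree]
      intro p hp hpp
      have h1 : p ∣ n := (dvd_mul_right p p).trans hpp
      have h2 : n = p * (n / p) := (Nat.mul_div_cancel' h1).symm
      have h3 : p ∣ n / p := by
        obtain ⟨c, hc⟩ := hpp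
        refine ⟨c, ?_⟩
        rw [hc, mul_assoc, Nat.mul_div_cancel_left _ hp.pos]
      have h4 : p ∣ n.totient := by
        rw [h2, Nat.totient_mul_of_prime_of_dvd hp h3]
        exact dvd_mul_right _ _
      rw [hj] at h4
      have h5 : p = 2 :=
        (Nat.prime_dvd_prime_iff_eq hp Nat.prime_two).mp (hp.dvd_of_dvd_pow h4)
      exact h2n (h5 ▸ h1)
    · intro p hpf
      have hp := Nat.prime_of_mem_primeFactors hpf
      have hpn : p ∣ n := Nat.dvd_of_mem_primeFactors hpf
      have h6 : (p - 1) ∣ 2 ^ j := by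
        rw [← hj, ← Nat.totient_prime hp]
        exact Nat.totient_dvd_of_dvd hpn
      obtain ⟨i, _, hi⟩ := (Nat.dvd_prime_pow Nat.prime_two).mp h6
      exact ⟨i, hi⟩
  · rintro ⟨hsf, hF⟩
    exact Stmt7Aux.back n hn hodd hsf hF
end
end

section
/- Let β ∈ ℤ[i] be coprime to 1+i, let ϖ > 0, let L = ℤ(1+i)ϖ + ℤ(1-i)ϖ, and let δ_β = (1+i)ϖ/β. If α, α' ∈ ℤ[i] satisfy αδ_β = (-1)^(m+n) α' δ_β + (m + ni)ϖ for some m, n ∈ ℤ, then α ≡ α' (mod β). -/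
open Complex

theorem stmt_11 (β : GaussianInt) (hβ : IsCoprime β (⟨1, 1⟩ : GaussianInt))
    (ϖ : ℝ) (hϖ : 0 < ϖ) (α α' : GaussianInt) (m n : ℤ)
    (h : (α : ℂ) * ((1 + I) * ϖ / (β : ℂ)) =
        (-1 : ℂ) ^ (m + n) * ((α' : ℂ) * ((1 + I) * ϖ / (β : ℂ))) +
          ((m : ℂ) + n * I) * ϖ) :
    β ∣ (α - α') := by
  have hβ0 : β ≠ 0 := by
    rintro rfl
    have hu : IsUnit (⟨1, 1⟩ : GaussianInt) := isCoprime_zero_left.mp hβ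
    have := Zsqrtd.norm_eq_one_iff.mpr hu
    simp [Zsqrtd.norm] at this
  have hβc : (β : ℂ) ≠ 0 := by
    simpa using hβ0
  have hϖc : (ϖ : ℂ) ≠ 0 := by exact_mod_cast hϖ.ne'
  have h11 : ((⟨1, 1⟩ : GaussianInt) : ℂ) = 1 + I := by
    simp [GaussianInt.toComplex_def]
  have hmn : ((⟨m, n⟩ : GaussianInt) : ℂ) = (m : ℂ) + n * I := by
    simp [GaussianInt.toComplex_def]
  rcases Int.even_or_odd (m + n) with he | ho
  · rw [he.neg_one_zpow, one_mul] at h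
    have key : α * ⟨1, 1⟩ = α' * ⟨1, 1⟩ + ⟨m, n⟩ * β := by
      apply GaussianInt.toComplex_injective
      push_cast [GaussianInt.toComplex_mul, GaussianInt.toComplex_add, h11, hmn]
      field_simp at h
      refine mul_right_cancel₀ hϖc ?_
      linear_combination (ϖ : ℂ) * h
    have h2 : (⟨1, 1⟩ : GaussianInt) ∣ (⟨m, n⟩ : GaussianInt) * β :=
      ⟨α - α', by linear_combination -key⟩
    obtain ⟨c, hc⟩ := hβ.symm.dvd_of_dvd_mul_right h2
    refine ⟨c, ?_⟩
    have h110 : (⟨1, 1⟩ : GaussianInt) ≠ 0 := by decide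
    apply mul_left_cancel₀ h110
    linear_combination key + β * hc
  · rw [ho.neg_one_zpow] at h
    have key : α * ⟨1, 1⟩ = -(α' * ⟨1, 1⟩) + ⟨m, n⟩ * β := by
      apply GaussianInt.toComplex_injective
      push_cast [GaussianInt.toComplex_mul, GaussianInt.toComplex_add,
        GaussianInt.toComplex_neg, h11, hmn]
      field_simp at h
      refine mul_right_cancel₀ hϖc ?_
      linear_combination (ϖ : ℂ) * h
    have h2 : (⟨1, 1⟩ : GaussianInt) ∣ (⟨m, n⟩ : GaussianInt) * β :=
      ⟨α + α', by linear_combination -key⟩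
    obtain ⟨c, hc⟩ := hβ.symm.dvd_of_dvd_mul_right h2
    have hm : m = c.re - c.im := by
      have := congrArg Zsqrtd.re hc
      simpa [Zsqrtd.re_mul, sub_eq_add_neg] using this
    have hn : n = c.im + c.re := by
      have := congrArg Zsqrtd.im hc
      simpa [Zsqrtd.im_mul] using this
    exfalso
    rcases ho with ⟨k, hk⟩
    omega
end
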